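/- Let 1 ≤ i < j ≤ n, let c′ be the (i,j)-interchange of c, set δ = c_j − c_i, D₁ = ((j−i)/n)·(1 − (j−i)/n) and D₂ = (2(j−i)/n)·(μ_{ij}(S) − S̄). If D₂ ≤ 0 (equivalently μ_{ij}(S) ≤ S̄) and either δ < 0 or δ > −D₂/D₁, then f(c′) > f(c), i.e. the (i,j)-interchange is favorable. -/

import Mathlib

open Finset

/-- Partial sums of the sequence `c` (1-indexed): `partSum c k = c 1 + ⋯ + c k`. -/
noncomputable def partSum (c : ℕ → ℝ) (k : ℕ) : ℝ := ∑ i ∈ Finset.Icc 1 k, c i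

/-- The mean `S̄` of the partial sums `s_1, …, s_n`. -/
noncomputable def meanPS (n : ℕ) (c : ℕ → ℝ) : ℝ :=
  (1 / (n : ℝ)) * ∑ k ∈ Finset.Icc 1 n, partSum c k

/-- The variance `f(c)` of the partial sums `s_1, …, s_n`. -/
noncomputable def varPS (n : ℕ) (c : ℕ → ℝ) : ℝ :=
  (1 / (n : ℝ)) * ∑ k ∈ Finset.Icc 1 n, (partSum c k - meanPS n c) ^ 2

/-- The `(i,j)`-partial mean `μ_{ij}(S) = (1/(j-i)) ∑_{k=i}^{j-1} s_k`. -/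
noncomputable def partMean (c : ℕ → ℝ) (i j : ℕ) : ℝ :=
  (1 / ((j : ℝ) - (i : ℝ))) * ∑ k ∈ Finset.Icc i (j - 1), partSum c k

/-- The `(i,j)`-interchange of `c`: swap the entries in positions `i` and `j`. -/
noncomputable def swapSeq (c : ℕ → ℝ) (i j : ℕ) : ℕ → ℝ := fun k => c (Equiv.swap i j k)

/-- `c` is an arrangement (permutation) of `a` on the index range `1..n`. -/
def IsArrangement (n : ℕ) (a c : ℕ → ℝ) : Prop :=
  ∃ σ : ℕ → ℕ, Set.BijOn σ (Set.Icc 1 n) (Set.Icc 1 n) ∧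
    ∀ k ∈ Set.Icc 1 n, c k = a (σ k)

/-- The dual sequence `c^d = (c_1, c_n, c_{n-1}, …, c_2)`. -/
noncomputable def dualSeq (n : ℕ) (c : ℕ → ℝ) : ℕ → ℝ :=
  fun k => if 2 ≤ k then c (n + 2 - k) else c k

lemma partSum_swap (c : ℕ → ℝ) (i j : ℕ) (hi : 1 ≤ i) (hij : i < j) (k : ℕ) :
    partSum (swapSeq c i j) k
      = partSum c k + (if k ∈ Finset.Icc i (j - 1) then c j - c i else 0) := by
  have hne : i ≠ j := hij.ne
  have h1 : ∀ t, swapSeq c i j t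
      = c t + ((if t = i then c j - c i else 0) + (if t = j then c i - c j else 0)) := by
    intro t
    unfold swapSeq
    rcases eq_or_ne t i with rfl | hti
    · simp [Equiv.swap_apply_left, hne]
    · rcases eq_or_ne t j with rfl | htj
      · simp [Equiv.swap_apply_right, hne.symm, hti]
      · simp [Equiv.swap_apply_of_ne_of_ne hti htj, hti, htj]
  unfold partSum
  simp only [h1]
  rw [Finset.sum_add_distrib, Finset.sum_add_distrib, Finset.sum_ite_eq',
    Finset.sum_ite_eq']
  simp only [Finset.mem_Icc]
  have h1j : 1 ≤ j := le_trans hi hij.le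
  split_ifs <;> (first | ring1 | (exfalso; omega))

lemma varPS_eq (n : ℕ) (hn : 1 ≤ n) (c : ℕ → ℝ) :
    varPS n c = (1 / (n : ℝ)) * (∑ k ∈ Finset.Icc 1 n, partSum c k ^ 2)
      - meanPS n c ^ 2 := by
  have hn0 : (n : ℝ) ≠ 0 := by positivity
  have hcard : (Finset.Icc 1 n).card = n := by rw [Nat.card_Icc]; omega
  have hsum : ∑ k ∈ Finset.Icc 1 n, partSum c k = (n : ℝ) * meanPS n c := by
    unfold meanPS; field_simp
  unfold varPS
  have expand : ∑ k ∈ Finset.Icc 1 n, (partSum c k - meanPS n c) ^ 2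
      = (∑ k ∈ Finset.Icc 1 n, partSum c k ^ 2)
        - 2 * meanPS n c * (∑ k ∈ Finset.Icc 1 n, partSum c k)
        + (n : ℝ) * meanPS n c ^ 2 := by
    rw [Finset.mul_sum,
      show ((n : ℝ)) * meanPS n c ^ 2 = ∑ _k ∈ Finset.Icc 1 n, meanPS n c ^ 2 by
        rw [Finset.sum_const, hcard, nsmul_eq_mul],
      ← Finset.sum_sub_distrib, ← Finset.sum_add_distrib]
    apply Finset.sum_congr rfl
    intro k _
    ring
  rw [expand, hsum]
  field_simp
  ring

set_option maxHeartbeats 1000000 in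
/-- Claim 2: criterion for a favorable (i,j)-interchange when D₂ ≤ 0. -/
theorem swap_favorable_of_D2_nonpos (n : ℕ) (hn : 1 ≤ n) (c : ℕ → ℝ) (i j : ℕ)
    (hi : 1 ≤ i) (hij : i < j) (hj : j ≤ n)
    (hD2 : 2 * ((j : ℝ) - (i : ℝ)) / (n : ℝ) * (partMean c i j - meanPS n c) ≤ 0)
    (hδ : c j - c i < 0 ∨
      -(2 * ((j : ℝ) - (i : ℝ)) / (n : ℝ) * (partMean c i j - meanPS n c)) /
          ((((j : ℝ) - (i : ℝ)) / (n : ℝ)) * (1 - ((j : ℝ) - (i : ℝ)) / (n : ℝ)))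
        < c j - c i) :
    varPS n c < varPS n (swapSeq c i j) := by
  set δ : ℝ := c j - c i with hδdef
  obtain ⟨A, hA⟩ : ∃ x : ℝ, ∑ k ∈ Finset.Icc 1 n, partSum c k = x := ⟨_, rfl⟩
  obtain ⟨B, hB⟩ : ∃ x : ℝ, ∑ k ∈ Finset.Icc 1 n, partSum c k ^ 2 = x := ⟨_, rfl⟩
  obtain ⟨M, hM⟩ : ∃ x : ℝ, ∑ k ∈ Finset.Icc i (j - 1), partSum c k = x := ⟨_, rfl⟩
  have hn0 : (0 : ℝ) < n := by exact_mod_cast hn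
  have hmr : (0 : ℝ) < (j : ℝ) - (i : ℝ) := by
    have : (i : ℝ) < (j : ℝ) := by exact_mod_cast hij
    linarith
  have hmn : (j : ℝ) - (i : ℝ) ≤ (n : ℝ) - 1 := by
    have h1 : (j : ℝ) ≤ (n : ℝ) := by exact_mod_cast hj
    have h2 : (1 : ℝ) ≤ (i : ℝ) := by exact_mod_cast hi
    linarith
  have hsub : Finset.Icc i (j - 1) ⊆ Finset.Icc 1 n :=
    Finset.Icc_subset_Icc hi (by omega)
  have hcardT : ((Finset.Icc i (j - 1)).card : ℝ) = (j : ℝ) - (i : ℝ) := by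
    rw [Nat.card_Icc]
    have : j - 1 + 1 - i = j - i := by omega
    rw [this]
    push_cast [Nat.cast_sub hij.le]
    ring
  have hiteT : ∀ f : ℕ → ℝ,
      ∑ k ∈ Finset.Icc 1 n, (if k ∈ Finset.Icc i (j - 1) then f k else 0)
        = ∑ k ∈ Finset.Icc i (j - 1), f k := by
    intro f
    rw [Finset.sum_ite_mem, Finset.inter_eq_right.mpr hsub]
  have hA' : ∑ k ∈ Finset.Icc 1 n, partSum (swapSeq c i j) k
      = A + ((j : ℝ) - (i : ℝ)) * δ := by
    simp only [partSum_swap c i j hi hij, Finset.sum_add_distrib, hA, hiteT]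
    rw [Finset.sum_const, nsmul_eq_mul, hcardT]
  have hB' : ∑ k ∈ Finset.Icc 1 n, partSum (swapSeq c i j) k ^ 2
      = B + 2 * δ * M + ((j : ℝ) - (i : ℝ)) * δ ^ 2 := by
    have hsq : ∀ k, partSum (swapSeq c i j) k ^ 2
        = partSum c k ^ 2
          + (if k ∈ Finset.Icc i (j - 1) then 2 * δ * partSum c k + δ ^ 2 else 0) := by
      intro k
      rw [partSum_swap c i j hi hij]
      split_ifs <;> ring
    simp only [hsq, Finset.sum_add_distrib, hB, hiteT]
    rw [Finset.sum_const, nsmul_eq_mul, hcardT, ← Finset.mul_sum, hM]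
    ring
  have hmean : meanPS n c = A / n := by unfold meanPS; rw [hA]; ring
  have hmean' : meanPS n (swapSeq c i j) = (A + ((j : ℝ) - (i : ℝ)) * δ) / n := by
    unfold meanPS; rw [hA']; ring
  have hpm : partMean c i j = M / ((j : ℝ) - (i : ℝ)) := by
    unfold partMean; rw [hM]; ring
  have hv1 : varPS n c = B / n - (A / n) ^ 2 := by
    rw [varPS_eq n hn c, hB, hmean]; ring
  have hv2 : varPS n (swapSeq c i j)
      = (B + 2 * δ * M + ((j : ℝ) - (i : ℝ)) * δ ^ 2) / n
        - ((A + ((j : ℝ) - (i : ℝ)) * δ) / n) ^ 2 := by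
    rw [varPS_eq n hn (swapSeq c i j), hB', hmean']; ring
  rw [hpm, hmean] at hD2 hδ
  -- translate hD2
  have hpos2 : (0 : ℝ) < 2 * ((j : ℝ) - (i : ℝ)) / n := by positivity
  have h3 : M / ((j : ℝ) - (i : ℝ)) - A / n ≤ 0 := by
    by_contra h
    push_neg at h
    nlinarith [mul_pos hpos2 h]
  have hMA : M * (n : ℝ) ≤ A * ((j : ℝ) - (i : ℝ)) := by
    have h4 : M / ((j : ℝ) - (i : ℝ)) ≤ A / n := by linarith
    rwa [div_le_div_iff₀ hmr hn0] at h4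
  -- variance difference formula
  have hdiff : varPS n (swapSeq c i j) - varPS n c
      = (2 * δ * (M * (n : ℝ) - A * ((j : ℝ) - (i : ℝ)))
          + ((j : ℝ) - (i : ℝ)) * δ ^ 2 * ((n : ℝ) - ((j : ℝ) - (i : ℝ)))) / (n : ℝ) ^ 2 := by
    rw [hv1, hv2]
    field_simp
    ring
  have key : 0 < 2 * δ * (M * (n : ℝ) - A * ((j : ℝ) - (i : ℝ)))
      + ((j : ℝ) - (i : ℝ)) * δ ^ 2 * ((n : ℝ) - ((j : ℝ) - (i : ℝ))) := by
    rcases hδ with hneg | hpos3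
    · have hsq : 0 < δ ^ 2 := by nlinarith [hneg]
      have t1 : 0 ≤ 2 * δ * (M * (n : ℝ) - A * ((j : ℝ) - (i : ℝ))) := by
        nlinarith [mul_nonneg (by linarith : (0:ℝ) ≤ -δ)
          (by linarith : (0:ℝ) ≤ A * ((j : ℝ) - (i : ℝ)) - M * (n : ℝ))]
      have t2 : 0 < ((j : ℝ) - (i : ℝ)) * δ ^ 2 * ((n : ℝ) - ((j : ℝ) - (i : ℝ))) := by
        have : (0:ℝ) < (n : ℝ) - ((j : ℝ) - (i : ℝ)) := by linarith
        positivity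
      linarith
    · have hD1 : (0 : ℝ) < (((j : ℝ) - (i : ℝ)) / n) * (1 - ((j : ℝ) - (i : ℝ)) / n) := by
        have h1 : (0:ℝ) < ((j : ℝ) - (i : ℝ)) / n := by positivity
        have h2 : ((j : ℝ) - (i : ℝ)) / n < 1 := by
          rw [div_lt_one hn0]; linarith
        nlinarith
      rw [div_lt_iff₀ hD1] at hpos3
      have hsqn : (0:ℝ) < (n : ℝ) ^ 2 := by positivity
      have h2 := mul_lt_mul_of_pos_right hpos3 hsqn
      have e1 : -(2 * ((j : ℝ) - (i : ℝ)) / n * (M / ((j : ℝ) - (i : ℝ)) - A / n)) * (n : ℝ) ^ 2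
          = -(2 * (M * (n : ℝ) - A * ((j : ℝ) - (i : ℝ)))) := by
        field_simp [hn0.ne', hmr.ne']
      have eD : (((j : ℝ) - (i : ℝ)) / n * (1 - ((j : ℝ) - (i : ℝ)) / n)) * (n : ℝ) ^ 2
          = ((j : ℝ) - (i : ℝ)) * ((n : ℝ) - ((j : ℝ) - (i : ℝ))) := by
        field_simp
      have e2 : δ * (((j : ℝ) - (i : ℝ)) / n * (1 - ((j : ℝ) - (i : ℝ)) / n)) * (n : ℝ) ^ 2
          = δ * (((j : ℝ) - (i : ℝ)) * ((n : ℝ) - ((j : ℝ) - (i : ℝ)))) := by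
        rw [mul_assoc, eD]
      rw [e1, e2] at h2
      have hδpos : 0 < δ := by
        by_contra h
        push_neg at h
        have hnn : (0:ℝ) < ((j : ℝ) - (i : ℝ)) * ((n : ℝ) - ((j : ℝ) - (i : ℝ))) := by
          have : (0:ℝ) < (n : ℝ) - ((j : ℝ) - (i : ℝ)) := by linarith
          positivity
        nlinarith [mul_nonneg (neg_nonneg.mpr h) hnn.le]
      nlinarith [mul_pos hδpos (by linarith :
        (0:ℝ) < δ * (((j : ℝ) - (i : ℝ)) * ((n : ℝ) - ((j : ℝ) - (i : ℝ))))
          + 2 * (M * (n : ℝ) - A * ((j : ℝ) - (i : ℝ))))]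
  have : 0 < varPS n (swapSeq c i j) - varPS n c := by
    rw [hdiff]
    positivity
  linarith
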